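/- With channel gain |h|² ∼ Exp(1) independent of noise power σ² having log-uniform density 1/(2x ln ρ) on [σ²_n/ρ, ρσ²_n], the outage probability ℙ(P|h|²/σ² < κ) equals 1 − (1/(2 ln ρ))·[Ei(−κρσ²_n/P) − Ei(−κσ²_n/(Pρ))], for P > 0, κ > 0, ρ > 1, σ²_n > 0. -/

import Mathlib

open MeasureTheory

/-- `Ei (−z) = −∫_z^∞ e^{−t}/t dt` for `z > 0`. -/
noncomputable def EiNeg (z : ℝ) : ℝ := -∫ t in Set.Ioi z, Real.exp (-t) / t

open Set Real in
-- slice lemma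
lemma mySlice (c : ℝ) :
    (volume.withDensity fun x => ENNReal.ofReal (if 0 ≤ x then Real.exp (-x) else 0))
      (Set.Iio c) = ENNReal.ofReal (1 - Real.exp (-c)) := by
  rw [withDensity_apply _ measurableSet_Iio]
  have h1 : (fun x : ℝ => ENNReal.ofReal (if 0 ≤ x then Real.exp (-x) else 0))
      = Set.indicator (Set.Ici 0) (fun x => ENNReal.ofReal (Real.exp (-x))) := by
    ext x; by_cases h : 0 ≤ x <;> simp [Set.indicator, h]
  rw [h1, lintegral_indicator measurableSet_Ici,
    Measure.restrict_restrict measurableSet_Ici]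
  have h2 : Set.Ici (0:ℝ) ∩ Set.Iio c = Set.Ico 0 c := by
    ext x; simp [Set.mem_Ico, and_comm]
  rw [h2]
  rcases le_or_gt c 0 with hc | hc
  · rw [Set.Ico_eq_empty (by linarith), Measure.restrict_empty, lintegral_zero_measure]
    symm
    rw [ENNReal.ofReal_eq_zero]
    have : (1:ℝ) ≤ Real.exp (-c) := by
      rw [← Real.exp_zero]; exact Real.exp_le_exp.2 (by linarith)
    linarith
  · rw [← ofReal_integral_eq_lintegral_ofReal]
    · congr 1
      rw [← MeasureTheory.integral_Icc_eq_integral_Ico, MeasureTheory.integral_Icc_eq_integral_Ioc,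
        ← intervalIntegral.integral_of_le hc.le,
        intervalIntegral.integral_comp_neg (fun x => Real.exp x)]
      simp [integral_exp]
    · exact (Real.continuous_exp.comp continuous_neg).integrableOn_Icc.mono_set
        Set.Ico_subset_Icc_self
    · exact Filter.Eventually.of_forall fun x => (Real.exp_pos _).le

lemma myIntegrable {z : ℝ} (hz : 0 < z) :
    IntegrableOn (fun t => Real.exp (-t) / t) (Set.Ioi z) := by
  have hg : IntegrableOn (fun t => Real.exp (-t) / z) (Set.Ioi z) := by
    have := (exp_neg_integrableOn_Ioi z (one_pos)).div_const z
    simpa [IntegrableOn] using this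
  refine hg.integrable.mono ?_ ?_
  · exact (Measurable.div (by fun_prop) measurable_id).aestronglyMeasurable
  · filter_upwards [ae_restrict_mem measurableSet_Ioi] with t ht
    have htz : z < t := ht
    rw [Real.norm_eq_abs, Real.norm_eq_abs,
      abs_of_nonneg (div_nonneg (Real.exp_pos _).le (hz.trans htz).le),
      abs_of_nonneg (by positivity)]
    exact div_le_div_of_nonneg_left (Real.exp_pos _).le hz htz.le

lemma myEi {a b : ℝ} (ha : 0 < a) (hab : a ≤ b) :
    EiNeg b - EiNeg a = ∫ t in a..b, Real.exp (-t) / t := by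
  have hb : 0 < b := lt_of_lt_of_le ha hab
  have h1 : IntegrableOn (fun t => Real.exp (-t) / t) (Set.Ioc a b) :=
    (myIntegrable ha).mono_set Set.Ioc_subset_Ioi_self
  have h2 : IntegrableOn (fun t => Real.exp (-t) / t) (Set.Ioi b) := myIntegrable hb
  have hsplit : ∫ t in Set.Ioi a, Real.exp (-t) / t
      = (∫ t in Set.Ioc a b, Real.exp (-t) / t) + ∫ t in Set.Ioi b, Real.exp (-t) / t := by
    rw [← Set.Ioc_union_Ioi_eq_Ioi hab]
    exact setIntegral_union (Set.Ioc_disjoint_Ioi le_rfl) measurableSet_Ioi h1 h2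
  rw [intervalIntegral.integral_of_le hab]
  unfold EiNeg
  linarith [hsplit]

/-- With channel gain `|h|² ∼ Exp(1)` independent of the noise power with log-uniform density
`1/(2 y ln ρ)` on `[σ²ₙ/ρ, ρσ²ₙ]`, the outage probability `ℙ(P |h|² < κ σ²)` equals
`1 − (1/(2 ln ρ)) [Ei(−κρσ²ₙ/P) − Ei(−κσ²ₙ/(Pρ))]`. -/
theorem stmt_5 (P κ ρ σn2 : ℝ) (hP : 0 < P) (hκ : 0 < κ) (hρ : 1 < ρ) (hσn2 : 0 < σn2) :
    (((volume.withDensity fun x =>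
          ENNReal.ofReal (if 0 ≤ x then Real.exp (-x) else 0)).prod
        (volume.withDensity fun y =>
          ENNReal.ofReal
            (if y ∈ Set.Icc (σn2 / ρ) (ρ * σn2) then 1 / (2 * y * Real.log ρ) else 0)))
      {p : ℝ × ℝ | P * p.1 < κ * p.2}).toReal
      = 1 - 1 / (2 * Real.log ρ) *
          (EiNeg (κ * ρ * σn2 / P) - EiNeg (κ * σn2 / (P * ρ))) := by
  have hρ0 : (0:ℝ) < ρ := by linarith
  have hL : 0 < Real.log ρ := Real.log_pos hρ
  set a := σn2 / ρ with ha_def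
  set b := ρ * σn2 with hb_def
  have ha : 0 < a := div_pos hσn2 hρ0
  have hab : a ≤ b := by
    rw [ha_def, hb_def, div_le_iff₀ hρ0]
    nlinarith [mul_pos hρ0 hρ0, sq_nonneg (ρ - 1), mul_nonneg (mul_nonneg (sub_nonneg.2 hρ.le) (by linarith : (0:ℝ) ≤ ρ + 1)) hσn2.le]
  have hb : 0 < b := lt_of_lt_of_le ha hab
  set c := κ / P with hc_def
  have hc : 0 < c := div_pos hκ hP
  have hs : MeasurableSet {p : ℝ × ℝ | P * p.1 < κ * p.2} :=
    measurableSet_lt (by fun_prop) (by fun_prop)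
  rw [Measure.prod_apply_symm hs]
  have hpre : ∀ y : ℝ, ((fun x => (x, y)) ⁻¹' {p : ℝ × ℝ | P * p.1 < κ * p.2})
      = Set.Iio (κ * y / P) := by
    intro y; ext x
    simp only [Set.mem_preimage, Set.mem_setOf_eq, Set.mem_Iio, lt_div_iff₀ hP]
    constructor <;> intro h <;> linarith [h]
  simp_rw [hpre, mySlice]
  rw [lintegral_withDensity_eq_lintegral_mul _ ?hgm ?hhm]
  case hgm =>
    apply Measurable.ennreal_ofReal
    exact Measurable.ite measurableSet_Icc (by fun_prop) measurable_const
  case hhm => fun_prop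
  -- rewrite integrand as ofReal of indicator
  set F : ℝ → ℝ := fun y => 1 / (2 * y * Real.log ρ) * (1 - Real.exp (-(κ * y / P))) with hF_def
  have hint : ∀ y : ℝ,
      (ENNReal.ofReal (if y ∈ Set.Icc a b then 1 / (2 * y * Real.log ρ) else 0)
        * ENNReal.ofReal (1 - Real.exp (-(κ * y / P))))
      = ENNReal.ofReal (Set.indicator (Set.Icc a b) F y) := by
    intro y
    by_cases hy : y ∈ Set.Icc a b
    · have hy0 : 0 < y := lt_of_lt_of_le ha hy.1
      rw [if_pos hy, Set.indicator_of_mem hy, ← ENNReal.ofReal_mul (by positivity)]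
    · rw [if_neg hy, Set.indicator_of_notMem hy]
      simp
  simp only [Pi.mul_apply]
  simp_rw [hint]
  -- integrability of indicator
  have hFc : ContinuousOn F (Set.Icc a b) := by
    apply ContinuousOn.mul
    · apply ContinuousOn.div continuousOn_const (by fun_prop)
      intro y hy
      have : 0 < y := lt_of_lt_of_le ha hy.1
      positivity
    · fun_prop
  have hInd : Integrable (Set.indicator (Set.Icc a b) F) := by
    rw [integrable_indicator_iff measurableSet_Icc]
    exact hFc.integrableOn_compact isCompact_Icc
  have hIndNN : 0 ≤ᵐ[volume] Set.indicator (Set.Icc a b) F := by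
    refine Filter.Eventually.of_forall fun y => ?_
    simp only [Pi.zero_apply]
    by_cases hy : y ∈ Set.Icc a b
    · rw [Set.indicator_of_mem hy, hF_def]
      have hy0 : 0 < y := lt_of_lt_of_le ha hy.1
      have : Real.exp (-(κ * y / P)) ≤ 1 := by
        rw [← Real.exp_zero]
        apply Real.exp_le_exp.2
        have : 0 < κ * y / P := by positivity
        linarith
      have h1 : 0 ≤ 1 / (2 * y * Real.log ρ) := by positivity
      exact mul_nonneg h1 (by linarith)
    · rw [Set.indicator_of_notMem hy]
  rw [← ofReal_integral_eq_lintegral_ofReal hInd hIndNN,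
    ENNReal.toReal_ofReal (integral_nonneg_of_ae hIndNN)]
  -- now pure real computation
  rw [integral_indicator measurableSet_Icc, integral_Icc_eq_integral_Ioc,
    ← intervalIntegral.integral_of_le hab]
  have hFeq : ∀ y : ℝ, F y = (1 / (2 * Real.log ρ)) * (1 / y - Real.exp (-(c * y)) / y) := by
    intro y
    by_cases hy : y = 0
    · simp [hF_def, hy]
    · simp only [hF_def]
      have hcy : κ * y / P = c * y := by rw [hc_def]; field_simp
      rw [hcy, div_sub_div_same, one_div_mul_eq_div, one_div_mul_eq_div, div_div]
      ring_nf
  simp_rw [hFeq]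
  rw [intervalIntegral.integral_const_mul]
  have h0uIcc : (0:ℝ) ∉ Set.uIcc a b := by
    rw [Set.uIcc_of_le hab]
    intro h
    exact absurd h.1 (by linarith)
  have hi1 : IntervalIntegrable (fun y => 1 / y) volume a b := by
    apply ContinuousOn.intervalIntegrable
    apply ContinuousOn.div continuousOn_const (by fun_prop)
    intro y hy
    rcases (Set.uIcc_of_le hab ▸ hy : y ∈ Set.Icc a b) with ⟨h1, _⟩
    exact ne_of_gt (lt_of_lt_of_le ha h1)
  have hi2 : IntervalIntegrable (fun y => Real.exp (-(c * y)) / y) volume a b := by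
    apply ContinuousOn.intervalIntegrable
    apply ContinuousOn.div (by fun_prop) (by fun_prop)
    intro y hy
    rcases (Set.uIcc_of_le hab ▸ hy : y ∈ Set.Icc a b) with ⟨h1, _⟩
    exact ne_of_gt (lt_of_lt_of_le ha h1)
  rw [intervalIntegral.integral_sub hi1 hi2]
  rw [integral_one_div h0uIcc]
  have hba : b / a = ρ ^ 2 := by
    rw [hb_def, ha_def]
    field_simp
  rw [hba, Real.log_pow]
  -- substitution
  have hpt : ∀ y : ℝ, Real.exp (-(c * y)) / y = c * (Real.exp (-(c * y)) / (c * y)) := by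
    intro y
    by_cases hy : y = 0
    · simp [hy]
    · rw [mul_div_assoc']
      rw [mul_div_mul_left _ _ (ne_of_gt hc)]
  have hsub : (∫ y in a..b, Real.exp (-(c * y)) / y)
      = ∫ t in c * a..c * b, Real.exp (-t) / t := by
    calc (∫ y in a..b, Real.exp (-(c * y)) / y)
        = c * ∫ y in a..b, (fun t => Real.exp (-t) / t) (c * y) := by
          simp_rw [hpt]
          rw [intervalIntegral.integral_const_mul]
      _ = ∫ t in c * a..c * b, Real.exp (-t) / t :=
          intervalIntegral.mul_integral_comp_mul_left (f := fun t => Real.exp (-t) / t) c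
  rw [hsub, ← myEi (by positivity) (by nlinarith [mul_le_mul_of_nonneg_left hab hc.le])]
  have e1 : c * b = κ * ρ * σn2 / P := by rw [hc_def, hb_def]; field_simp
  have e2 : c * a = κ * σn2 / (P * ρ) := by
    rw [hc_def, ha_def]; field_simp
  rw [e1, e2]
  have hL' : Real.log ρ ≠ 0 := ne_of_gt hL
  push_cast
  field_simp
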